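/- Optional Stopping Theorem for weakest preexpectations, case (c): let f and I be bounded expectations (there is c ∈ ℝ≥0 with f(s) ≤ c and I(s) ≤ c for all s) with I ⪯ Φ_f(I) (a subinvariant). If the loop is universally almost surely terminating, i.e., P_s(τ < ∞) = 1 for every s ∈ Σ, then I ⪯ lfp Φ_f. -/

import Mathlib

open MeasureTheory Filter Topology
open scoped Classical ENNReal ENat NNReal

/-! Loop model: states `S`, guard `φ : Set S`, loop-body transition probabilities
`μ : S → S → ℝ≥0`. Expectations are functions `S → ℝ≥0∞` with the pointwise order. -/

variable {S : Type*}

/-- One-step weakest preexpectation of the loop body: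
`wpF μ X s = ∑_{s'} μ s s' * X s'`. -/
noncomputable def wpF (μ : S → S → ℝ≥0) (X : S → ℝ≥0∞) (s : S) : ℝ≥0∞ :=
  ∑' s', (μ s s' : ℝ≥0∞) * X s'

/-- The characteristic function `Φ_f` of the loop `while φ do C` with respect to the
postexpectation `f`. -/
noncomputable def Phi (φ : Set S) (μ : S → S → ℝ≥0) (f : S → ℝ≥0∞)
    (X : S → ℝ≥0∞) (s : S) : ℝ≥0∞ :=
  if s ∈ φ then wpF μ X s else f s

theorem Phi_mono (φ : Set S) (μ : S → S → ℝ≥0) (f : S → ℝ≥0∞) :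
    Monotone (Phi φ μ f) := by
  intro X Y h s
  unfold Phi wpF
  split_ifs with hs
  · exact ENNReal.tsum_le_tsum fun s' => mul_le_mul_right (h s') _
  · exact le_rfl

/-- Least fixed point of the characteristic function `Φ_f`,
i.e. the weakest preexpectation `wp(while φ do C)(f)`. -/
noncomputable def lfpPhi (φ : Set S) (μ : S → S → ℝ≥0) (f : S → ℝ≥0∞) : S → ℝ≥0∞ :=
  OrderHom.lfp ⟨Phi φ μ f, Phi_mono φ μ f⟩

/-- A finite expectation: `X s < ∞` for all states. -/
def FinExp (X : S → ℝ≥0∞) : Prop := ∀ s, X s < ⊤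

/-- A bounded expectation: `X s ≤ c` for some constant `c : ℝ≥0`. -/
def BddExp (X : S → ℝ≥0∞) : Prop := ∃ c : ℝ≥0, ∀ s, X s ≤ (c : ℝ≥0∞)

/-- `I` harmonizes with `f` if `I` agrees with `f` on all terminal states (states
outside the guard). -/
def Harmonizes (φ : Set S) (I f : S → ℝ≥0∞) : Prop := ∀ s ∉ φ, I s = f s

/-- `ΔI`: the expected change of `I` within one loop iteration. -/
noncomputable def dExp (φ : Set S) (μ : S → S → ℝ≥0) (I : S → ℝ≥0∞) (s : S) : ℝ≥0∞ :=
  if s ∈ φ then ∑' s', (μ s s' : ℝ≥0∞) * ((I s' - I s) ⊔ (I s - I s')) else 0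

/-- `I` is conditionally difference bounded if `ΔI` is bounded by a constant. -/
def CondDiffBdd (φ : Set S) (μ : S → S → ℝ≥0) (I : S → ℝ≥0∞) : Prop :=
  ∃ c : ℝ≥0, ∀ s, dExp φ μ I s ≤ (c : ℝ≥0∞)

/-! The loop space `Ω := ℕ → S` with its product σ-algebra (`S` discrete). -/

/-- The cylinder set of a finite sequence of states. -/
def Cyl (π : List S) : Set (ℕ → S) := {ϑ | ∀ i : Fin π.length, ϑ i = π.get i}

/-- The σ-algebra `F_n`, generated by the cylinder sets of sequences of length `n+1`. -/
def Fn (n : ℕ) : MeasurableSpace (ℕ → S) :=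
  MeasurableSpace.generateFrom {A | ∃ π : List S, π.length = n + 1 ∧ A = Cyl π}

/-- The shifted filtration `G_n := F_{n+1}`. -/
def Gn (n : ℕ) : MeasurableSpace (ℕ → S) := Fn (n + 1)

/-- One-step transition probability of the loop: from a state `a` inside the guard move
according to `μ`; a state outside the guard is absorbing. -/
noncomputable def stepP (φ : Set S) (μ : S → S → ℝ≥0) (a b : S) : ℝ≥0 :=
  if a ∈ φ then μ a b else if b = a then 1 else 0

/-- Product of the one-step transition probabilities along a finite sequence. -/
noncomputable def chainP (φ : Set S) (μ : S → S → ℝ≥0) : List S → ℝ≥0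
  | [] => 1
  | [_] => 1
  | a :: b :: rest => stepP φ μ a b * chainP φ μ (b :: rest)

/-- The prefix probability `p_s(π)` of the finite sequence `π` of states, starting the
loop in the state `s`. -/
noncomputable def prefP (φ : Set S) (μ : S → S → ℝ≥0) (s : S) (π : List S) : ℝ≥0 :=
  (if π.head? = some s then 1 else 0) * chainP φ μ π

/-- The looping time `τ`: the first time the run leaves the guard. -/
noncomputable def loopT (φ : Set S) (ϑ : ℕ → S) : ℕ∞ :=
  sInf {n : ℕ∞ | ∃ m : ℕ, n = (m : ℕ∞) ∧ ϑ m ∉ φ}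

/-- The stochastic process `X_n^{f,I}` induced by the invariant `I` (w.r.t. the
postexpectation `f`). -/
noncomputable def Xn (φ : Set S) (f I : S → ℝ≥0∞) (n : ℕ) (ϑ : ℕ → S) : ℝ≥0∞ :=
  if loopT φ ϑ ≤ (n : ℕ∞) then f (ϑ (loopT φ ϑ).toNat) else I (ϑ (n + 1))

/-- The stopped process `X_τ^f`. -/
noncomputable def Xstop (φ : Set S) (f : S → ℝ≥0∞) (ϑ : ℕ → S) : ℝ≥0∞ :=
  if loopT φ ϑ < ⊤ then f (ϑ (loopT φ ϑ).toNat) else 0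


/-! ### Auxiliary definitions and lemmas for the proof -/

section OSTAux

variable {S : Type*}

/-- Guard-survival mass. -/
noncomputable def Gf (φ : Set S) (μ : S → S → ℝ≥0) : ℕ → S → ℝ≥0∞
  | 0, _ => 1
  | (n+1), s => if s ∈ φ then ∑' s', (μ s s' : ℝ≥0∞) * Gf φ μ n s' else 0

lemma Gf_zero (φ : Set S) (μ : S → S → ℝ≥0) (s : S) : Gf φ μ 0 s = 1 := rfl

lemma Gf_succ (φ : Set S) (μ : S → S → ℝ≥0) (n : ℕ) (s : S) :
    Gf φ μ (n+1) s = if s ∈ φ then ∑' s', (μ s s' : ℝ≥0∞) * Gf φ μ n s' else 0 := rfl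

lemma iter_le_lfpPhi (φ : Set S) (μ : S → S → ℝ≥0) (f : S → ℝ≥0∞) (n : ℕ) :
    (Phi φ μ f)^[n] (fun _ => 0) ≤ lfpPhi φ μ f := by
  induction n with
  | zero => intro s; exact zero_le
  | succ n ih =>
      rw [Function.iterate_succ_apply']
      calc Phi φ μ f ((Phi φ μ f)^[n] fun _ => 0)
          ≤ Phi φ μ f (lfpPhi φ μ f) := Phi_mono φ μ f ih
        _ = lfpPhi φ μ f := OrderHom.map_lfp (⟨Phi φ μ f, Phi_mono φ μ f⟩ : _ →o _)

lemma I_le_iter (φ : Set S) (μ : S → S → ℝ≥0) (f I : S → ℝ≥0∞) (c : ℝ≥0)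
    (hIc : ∀ s, I s ≤ (c : ℝ≥0∞)) (hsub : I ≤ Phi φ μ f I) :
    ∀ n s, I s ≤ (Phi φ μ f)^[n] (fun _ => 0) s + (c : ℝ≥0∞) * Gf φ μ n s := by
  intro n
  induction n with
  | zero =>
      intro s
      simpa [Gf_zero] using hIc s
  | succ n ih =>
      intro s
      rw [Function.iterate_succ_apply']
      by_cases hs : s ∈ φ
      · have h1 : Phi φ μ f I s = wpF μ I s := if_pos hs
        calc I s ≤ Phi φ μ f I s := hsub s
          _ = ∑' s', (μ s s' : ℝ≥0∞) * I s' := h1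
          _ ≤ ∑' s', (μ s s' : ℝ≥0∞) *
                ((Phi φ μ f)^[n] (fun _ => 0) s' + (c : ℝ≥0∞) * Gf φ μ n s') :=
              ENNReal.tsum_le_tsum fun s' => mul_le_mul_right (ih s') _
          _ = (∑' s', (μ s s' : ℝ≥0∞) * (Phi φ μ f)^[n] (fun _ => 0) s')
                + ∑' s', (μ s s' : ℝ≥0∞) * ((c : ℝ≥0∞) * Gf φ μ n s') := by
              simp_rw [mul_add]; exact ENNReal.tsum_add
          _ = (∑' s', (μ s s' : ℝ≥0∞) * (Phi φ μ f)^[n] (fun _ => 0) s')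
                + (c : ℝ≥0∞) * ∑' s', (μ s s' : ℝ≥0∞) * Gf φ μ n s' := by
              rw [← ENNReal.tsum_mul_left]; simp_rw [mul_left_comm]
          _ = Phi φ μ f ((Phi φ μ f)^[n] fun _ => 0) s
                + (c : ℝ≥0∞) * Gf φ μ (n+1) s := by
              rw [Gf_succ, if_pos hs]
              congr 1
              exact (if_pos hs).symm
      · have h2 : Phi φ μ f ((Phi φ μ f)^[n] fun _ => 0) s = f s := if_neg hs
        rw [h2, Gf_succ, if_neg hs, mul_zero, add_zero]
        exact le_trans (hsub s) (le_of_eq (if_neg hs))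

lemma tsum_coe_mu {μ : S → S → ℝ≥0} (hμ : ∀ s, ∑' s', μ s s' = 1) (a : S) :
    ∑' s', ((μ a s' : ℝ≥0) : ℝ≥0∞) = 1 := by
  have hsum : Summable (μ a) := by
    by_contra h
    have h1 := hμ a
    rw [tsum_eq_zero_of_not_summable h] at h1
    exact one_ne_zero h1.symm
  rw [← ENNReal.coe_tsum hsum, hμ a, ENNReal.coe_one]

/-- The sum of prefix probabilities of guarded runs of length `m+1` starting at `a`. -/
noncomputable def cylSum (φ : Set S) (μ : S → S → ℝ≥0) (m : ℕ) (a : S) : ℝ≥0∞ :=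
  ∑' v : Fin m → S,
    if (∀ i, v i ∈ φ) then ((chainP φ μ (a :: List.ofFn v) : ℝ≥0) : ℝ≥0∞) else 0

/-- The cons equivalence, specialized. -/
def consE (S : Type*) (m : ℕ) : S × (Fin m → S) ≃ (Fin (m+1) → S) :=
  Fin.consEquiv (fun _ => S)

lemma consE_apply {m : ℕ} (b : S) (w : Fin m → S) :
    consE S m (b, w) = Fin.cons b w := rfl

lemma ofFn_cons {m : ℕ} (b : S) (w : Fin m → S) :
    List.ofFn (Fin.cons b w) = b :: List.ofFn w := by
  rw [List.ofFn_succ]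
  simp [Fin.cons_zero, Fin.cons_succ]

lemma cylSum_eq (φ : Set S) (μ : S → S → ℝ≥0) (hμ : ∀ s, ∑' s', μ s s' = 1) :
    ∀ m, ∀ a ∈ φ, cylSum φ μ m a = Gf φ μ (m+1) a := by
  intro m
  induction m with
  | zero =>
      intro a ha
      have h0 : cylSum φ μ 0 a = 1 := by
        rw [cylSum, tsum_eq_single (fun i => i.elim0)
          (fun v hv => absurd (funext fun i => i.elim0) hv)]
        simp [chainP]
      rw [h0, Gf_succ, if_pos ha]
      simp only [Gf_zero, mul_one]
      exact (tsum_coe_mu hμ a).symm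
  | succ m ih =>
      intro a ha
      set g : (Fin (m+1) → S) → ℝ≥0∞ := fun v =>
        if (∀ i, v i ∈ φ) then ((chainP φ μ (a :: List.ofFn v) : ℝ≥0) : ℝ≥0∞) else 0
        with hg
      have h1 : cylSum φ μ (m+1) a = ∑' p : S × (Fin m → S), g (consE S m p) :=
        (Equiv.tsum_eq (consE S m) g).symm
      have h2 : ∀ (b : S) (w : Fin m → S),
          g (consE S m (b, w)) = (μ a b : ℝ≥0∞) *
            (if (b ∈ φ ∧ ∀ i, w i ∈ φ)
              then ((chainP φ μ (b :: List.ofFn w) : ℝ≥0) : ℝ≥0∞) else 0) := by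
        intro b w
        have he : consE S m (b, w) = Fin.cons b w := rfl
        have hcond : (∀ i : Fin (m+1), (Fin.cons b w : Fin (m+1) → S) i ∈ φ)
            ↔ (b ∈ φ ∧ ∀ i, w i ∈ φ) := by
          rw [Fin.forall_fin_succ]
          simp [Fin.cons_zero, Fin.cons_succ]
        rw [hg, he]
        simp only [ofFn_cons, hcond]
        by_cases hb : (b ∈ φ ∧ ∀ i, w i ∈ φ)
        · rw [if_pos hb, if_pos hb]
          have : chainP φ μ (a :: b :: List.ofFn w)
              = stepP φ μ a b * chainP φ μ (b :: List.ofFn w) := rfl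
          rw [this]
          have : stepP φ μ a b = μ a b := if_pos ha
          rw [this, ENNReal.coe_mul]
        · rw [if_neg hb, if_neg hb, mul_zero]
      have h3 : ∀ b : S,
          (∑' w : Fin m → S, g (consE S m (b, w)))
            = (μ a b : ℝ≥0∞) * Gf φ μ (m+1) b := by
        intro b
        simp_rw [h2]
        rw [ENNReal.tsum_mul_left]
        congr 1
        by_cases hb : b ∈ φ
        · have : (∑' w : Fin m → S,
              if (b ∈ φ ∧ ∀ i, w i ∈ φ)
                then ((chainP φ μ (b :: List.ofFn w) : ℝ≥0) : ℝ≥0∞) else 0)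
              = cylSum φ μ m b := by
            rw [cylSum]
            congr 1
            funext w
            simp [hb]
          rw [this, ih b hb]
        · have hGf : Gf φ μ (m+1) b = 0 := by rw [Gf_succ, if_neg hb]
          rw [hGf]
          simp [hb]
      rw [h1, ENNReal.tsum_prod']
      simp_rw [h3]
      rw [Gf_succ, if_pos ha]

end OSTAux

section OSTMeas

variable {S : Type*} [Countable S] [MeasurableSpace S] [DiscreteMeasurableSpace S]

lemma measurableSet_Cyl (π : List S) : MeasurableSet (Cyl π) := by
  have h : Cyl π = ⋂ i : Fin π.length, (fun ϑ : ℕ → S => ϑ i) ⁻¹' {π.get i} := by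
    ext ϑ
    simp only [Cyl, Set.mem_setOf_eq, Set.mem_iInter, Set.mem_preimage,
      Set.mem_singleton_iff]
  rw [h]
  exact MeasurableSet.iInter fun i =>
    (measurable_pi_apply (i : ℕ)) (MeasurableSet.singleton _)

lemma mem_Cyl_ofFn {m : ℕ} (u : Fin m → S) (ϑ : ℕ → S) :
    ϑ ∈ Cyl (List.ofFn u) ↔ ∀ i : Fin m, ϑ i = u i := by
  unfold Cyl
  rw [Set.mem_setOf_eq]
  have hlen : (List.ofFn u).length = m := List.length_ofFn
  constructor
  · intro h i
    have := h (Fin.cast hlen.symm i)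
    rwa [List.get_ofFn] at this
  · intro h i
    exact (List.get_ofFn u i).trans (h (Fin.cast hlen i)).symm |>.symm

lemma G_le_meas (φ : Set S) (μ : S → S → ℝ≥0) (hμ : ∀ s, ∑' s', μ s s' = 1)
    (P : S → MeasureTheory.Measure (ℕ → S)) (hP : ∀ s, MeasureTheory.IsProbabilityMeasure (P s))
    (hPC : ∀ (s : S) (π : List S), π ≠ [] → P s (Cyl π) = (prefP φ μ s π : ℝ≥0∞)) :
    ∀ n s, Gf φ μ n s ≤ P s {ϑ : ℕ → S | ∀ i < n, ϑ i ∈ φ} := by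
  intro n s
  cases n with
  | zero =>
      have : {ϑ : ℕ → S | ∀ i < 0, ϑ i ∈ φ} = Set.univ := by
        ext ϑ; simp
      rw [Gf_zero, this]
      exact (measure_univ (μ := P s)).symm.le
  | succ m =>
      by_cases hs : s ∈ φ
      · -- cylinder family
        set C : (Fin m → S) → Set (ℕ → S) := fun v =>
          if (∀ i, v i ∈ φ) then Cyl (List.ofFn (Fin.cons s v)) else ∅ with hC
        have hmeas : ∀ v, MeasurableSet (C v) := by
          intro v
          simp only [hC]
          split_ifs
          · exact measurableSet_Cyl _
          · exact MeasurableSet.empty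
        have hdisj : Pairwise (Function.onFun Disjoint C) := by
          intro v w hvw
          simp only [Function.onFun, hC]
          split_ifs with h1 h2
          · rw [Set.disjoint_left]
            intro ϑ hv hw
            have hv' := (mem_Cyl_ofFn _ ϑ).1 hv
            have hw' := (mem_Cyl_ofFn _ ϑ).1 hw
            apply hvw
            funext j
            have e1 := hv' j.succ
            have e2 := hw' j.succ
            rw [Fin.cons_succ] at e1 e2
            rw [← e1, ← e2]
          all_goals simp
        have hsub : ∀ v, C v ⊆ {ϑ : ℕ → S | ∀ i < m + 1, ϑ i ∈ φ} := by
          intro v ϑ hϑ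
          simp only [hC] at hϑ
          split_ifs at hϑ with h1
          · intro i hi
            have h2 : ϑ i = (Fin.cons s v : Fin (m+1) → S) ⟨i, hi⟩ :=
              (mem_Cyl_ofFn _ ϑ).1 hϑ ⟨i, hi⟩
            rw [h2]
            rcases Fin.eq_zero_or_eq_succ (⟨i, hi⟩ : Fin (m+1)) with h | ⟨j, hj⟩
            · rw [h, Fin.cons_zero]; exact hs
            · rw [hj, Fin.cons_succ]; exact h1 j
          · exact absurd hϑ (Set.notMem_empty ϑ)
        have hval : ∀ v, P s (C v) =
            (if (∀ i, v i ∈ φ)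
              then ((chainP φ μ (s :: List.ofFn v) : ℝ≥0) : ℝ≥0∞) else 0) := by
          intro v
          simp only [hC]
          split_ifs with h1
          · rw [ofFn_cons, hPC s _ (List.cons_ne_nil _ _)]
            congr 1
            rw [prefP]
            simp
          · exact measure_empty
        calc Gf φ μ (m+1) s = cylSum φ μ m s := (cylSum_eq φ μ hμ m s hs).symm
          _ = ∑' v : Fin m → S, P s (C v) := by
              rw [cylSum]; congr 1; funext v; exact (hval v).symm
          _ = P s (⋃ v, C v) := (measure_iUnion hdisj hmeas).symm
          _ ≤ P s {ϑ : ℕ → S | ∀ i < m + 1, ϑ i ∈ φ} :=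
              measure_mono (Set.iUnion_subset hsub)
      · rw [Gf_succ, if_neg hs]
        exact zero_le

lemma loopT_lt_top_iff (φ : Set S) (ϑ : ℕ → S) :
    loopT φ ϑ < ⊤ ↔ ∃ m : ℕ, ϑ m ∉ φ := by
  constructor
  · intro h
    by_contra hc
    push_neg at hc
    have : {n : ℕ∞ | ∃ m : ℕ, n = (m : ℕ∞) ∧ ϑ m ∉ φ} = ∅ := by
      ext n
      simp only [Set.mem_setOf_eq, Set.mem_empty_iff_false, iff_false]
      rintro ⟨m, _, hm⟩
      exact hm (hc m)
    rw [loopT, this, sInf_empty] at h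
    exact lt_irrefl _ h
  · rintro ⟨m, hm⟩
    exact lt_of_le_of_lt (sInf_le ⟨m, rfl, hm⟩) (WithTop.coe_lt_top _)

end OSTMeas

/-- **Optional Stopping Theorem for weakest preexpectations, case (c).** A bounded
subinvariant `I` w.r.t. a bounded postexpectation `f` is a lower bound on `lfp Φ_f`,
provided the loop is universally almost surely terminating. -/
theorem ost_wp_case_c {S : Type*} [Countable S] [MeasurableSpace S] [DiscreteMeasurableSpace S]
    (φ : Set S) (μ : S → S → ℝ≥0) (hμ : ∀ s, ∑' s', μ s s' = 1)
    (P : S → Measure (ℕ → S)) (hP : ∀ s, IsProbabilityMeasure (P s))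
    (hPC : ∀ (s : S) (π : List S), π ≠ [] → P s (Cyl π) = (prefP φ μ s π : ℝ≥0∞))
    (f I : S → ℝ≥0∞) (hf : BddExp f) (hI : BddExp I) (hsub : I ≤ Phi φ μ f I)
    (hAST : ∀ s, P s {ϑ | loopT φ ϑ < ⊤} = 1) :
    I ≤ lfpPhi φ μ f := by
  obtain ⟨cI, hcI⟩ := hI
  have hIc : ∀ s, I s ≤ (cI : ℝ≥0∞) := hcI
  intro s
  set A : ℕ → Set (ℕ → S) := fun n => {ϑ : ℕ → S | ∀ i < n, ϑ i ∈ φ} with hA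
  have hAmeas : ∀ n, MeasurableSet (A n) := by
    intro n
    have h : A n = ⋂ i, ⋂ _ : i < n, (fun ϑ : ℕ → S => ϑ i) ⁻¹' φ := by
      ext ϑ; simp [hA]
    rw [h]
    exact MeasurableSet.iInter fun i => MeasurableSet.iInter fun _ =>
      (measurable_pi_apply i) MeasurableSet.of_discrete
  have hAnti : Antitone A := fun n n' h ϑ hϑ i hi => hϑ i (lt_of_lt_of_le hi h)
  have hInter : (⋂ n, A n) = {ϑ : ℕ → S | loopT φ ϑ < ⊤}ᶜ := by
    ext ϑ
    simp only [Set.mem_iInter, Set.mem_compl_iff, Set.mem_setOf_eq, hA,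
      loopT_lt_top_iff]
    push_neg
    constructor
    · intro h m
      exact h (m+1) m (Nat.lt_succ_self m)
    · intro h n i _
      exact h i
  have hzero : P s (⋂ n, A n) = 0 := by
    rw [hInter]
    have hmeas2 : MeasurableSet {ϑ : ℕ → S | loopT φ ϑ < ⊤} := by
      have h : {ϑ : ℕ → S | loopT φ ϑ < ⊤} = ⋃ m : ℕ, (fun ϑ : ℕ → S => ϑ m) ⁻¹' φᶜ := by
        ext ϑ; simp [loopT_lt_top_iff]
      rw [h]
      exact MeasurableSet.iUnion fun m =>
        (measurable_pi_apply m) MeasurableSet.of_discrete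
    have := hP s
    rw [measure_compl hmeas2 (measure_ne_top _ _), hAST s, measure_univ, tsub_self]
  have hTend : Tendsto (fun n => P s (A n)) atTop (𝓝 0) := by
    have h := tendsto_measure_iInter_atTop (μ := P s)
      (fun n => (hAmeas n).nullMeasurableSet) hAnti
      ⟨0, measure_ne_top _ _⟩
    rw [hzero] at h
    exact h
  have hTend2 : Tendsto (fun n => (cI : ℝ≥0∞) * P s (A n)) atTop (𝓝 0) := by
    have h := ENNReal.Tendsto.const_mul (a := (cI : ℝ≥0∞)) hTend
      (Or.inr ENNReal.coe_ne_top)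
    rwa [mul_zero] at h
  refine ENNReal.le_of_forall_pos_le_add fun ε hε _ => ?_
  obtain ⟨n, hn⟩ := (hTend2.eventually
    (gt_mem_nhds (show (0:ℝ≥0∞) < ε by exact_mod_cast hε))).exists
  calc I s ≤ (Phi φ μ f)^[n] (fun _ => 0) s + (cI : ℝ≥0∞) * Gf φ μ n s :=
        I_le_iter φ μ f I cI hIc hsub n s
    _ ≤ lfpPhi φ μ f s + (cI : ℝ≥0∞) * P s (A n) :=
        add_le_add (iter_le_lfpPhi φ μ f n s)
          (mul_le_mul_right (G_le_meas φ μ hμ P hP hPC n s) _)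
    _ ≤ lfpPhi φ μ f s + (ε : ℝ≥0∞) := add_le_add_right hn.le _
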